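/- Let a, b > 0 with a/b irrational, and let m, n, k ∈ ℕ. Then am + bn = N_k(a,b) if and only if (m+1)(n+1) − 1 + Σ_{i=1}^{m} ⌊ia/b⌋ + Σ_{j=1}^{n} ⌊jb/a⌋ = k. -/

import Mathlib

open Real Set Filter

noncomputable section

/-- `N_k(a,b)`: the `(k+1)`-st smallest element, counted with repetitions, of the sequence
of nonnegative integer linear combinations `am + bn` (`m, n ∈ ℕ`) written in nondecreasing
order; equivalently, `N_k(a,b) = inf {L ∈ ℝ | #{(m,n) ∈ ℕ×ℕ : am+bn ≤ L} ≥ k+1}`. -/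
def Nk (a b : ℝ) (k : ℕ) : ℝ :=
  sInf {L : ℝ | k + 1 ≤ {p : ℕ × ℕ | a * p.1 + b * p.2 ≤ L}.ncard}

/-- For `a, b > 0` with `a/b` irrational, `am + bn = N_k(a,b)` if and only if
`(m+1)(n+1) − 1 + Σ_{i=1}^{m} ⌊ia/b⌋ + Σ_{j=1}^{n} ⌊jb/a⌋ = k`. -/


lemma vinj {a b : ℝ} (hb : 0 < b) (hirr : Irrational (a / b)) :
    Function.Injective (fun p : ℕ × ℕ => a * p.1 + b * p.2) := by
  rintro ⟨m1, n1⟩ ⟨m2, n2⟩ h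
  simp only at h
  by_cases hm : m1 = m2
  · subst hm
    have : (n1 : ℝ) = n2 := mul_left_cancel₀ hb.ne' (by linarith)
    exact Prod.ext rfl (by exact_mod_cast this)
  · exfalso
    apply hirr
    refine ⟨((n2 : ℚ) - n1) / ((m1 : ℚ) - m2), ?_⟩
    have hm' : (m1 : ℝ) - m2 ≠ 0 := by
      intro h0
      exact hm (by exact_mod_cast sub_eq_zero.mp h0)
    push_cast
    rw [div_eq_div_iff hm' hb.ne']
    nlinarith [h]

lemma finite_le {a b : ℝ} (ha : 0 < a) (hb : 0 < b) (L : ℝ) :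
    {p : ℕ × ℕ | a * p.1 + b * p.2 ≤ L}.Finite := by
  apply Set.Finite.subset (Set.finite_Icc (0, 0) (⌊L / a⌋₊, ⌊L / b⌋₊))
  rintro ⟨m', n'⟩ h
  simp only [mem_setOf_eq] at h
  have h1 : (m' : ℝ) ≤ L / a := by
    rw [le_div_iff₀ ha]
    nlinarith [mul_nonneg hb.le (Nat.cast_nonneg (α := ℝ) n'), mul_nonneg ha.le (Nat.cast_nonneg (α := ℝ) m')]
  have h2 : (n' : ℝ) ≤ L / b := by
    rw [le_div_iff₀ hb]
    nlinarith [mul_nonneg hb.le (Nat.cast_nonneg (α := ℝ) n'), mul_nonneg ha.le (Nat.cast_nonneg (α := ℝ) m')]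
  constructor <;> simp [Prod.le_def, Nat.le_floor, h1, h2]

lemma natlt_irr {x : ℝ} (hx : 0 ≤ x) (hirr : Irrational x) (l : ℕ) :
    (l : ℝ) < x ↔ l ≤ ⌊x⌋₊ := by
  constructor
  · intro h; exact Nat.le_floor h.le
  · intro h
    have h1 : (l : ℝ) ≤ ⌊x⌋₊ := by exact_mod_cast h
    have h2 : (⌊x⌋₊ : ℝ) ≤ x := Nat.floor_le hx
    have h3 : x ≠ l := hirr.ne_nat l
    rcases lt_or_eq_of_le (h1.trans h2) with h | h
    · exact h
    · exact absurd h.symm h3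

lemma irr_ab {a b : ℝ} (hirr : Irrational (a / b)) {i : ℕ} (hi : 1 ≤ i) :
    Irrational ((i : ℝ) * a / b) := by
  have := hirr.natCast_mul (m := i) (by omega)
  rwa [mul_div_assoc]

lemma irr_ba {a b : ℝ} (hirr : Irrational (a / b)) {j : ℕ} (hj : 1 ≤ j) :
    Irrational ((j : ℝ) * b / a) := by
  have h1 : Irrational (b / a) := by
    have := hirr.inv
    rwa [inv_div] at this
  have := h1.natCast_mul (m := j) (by omega)
  rwa [mul_div_assoc]

lemma count_lt {a b : ℝ} (ha : 0 < a) (hb : 0 < b) (hirr : Irrational (a / b)) (m n : ℕ) :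
    {p : ℕ × ℕ | a * p.1 + b * p.2 < a * m + b * n}.ncard
      = ((m + 1) * (n + 1) - 1) + (∑ i ∈ Finset.Icc 1 m, ⌊(i : ℝ) * a / b⌋₊)
        + ∑ j ∈ Finset.Icc 1 n, ⌊(j : ℝ) * b / a⌋₊ := by
  classical
  set FA := (Finset.range (m + 1) ×ˢ Finset.range (n + 1)).erase (m, n) with hFAdef
  set FB := (Finset.Icc 1 m).biUnion
      (fun i => {m - i} ×ˢ Finset.Icc (n + 1) (n + ⌊(i : ℝ) * a / b⌋₊)) with hFBdef
  set FC := (Finset.Icc 1 n).biUnion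
      (fun j => (Finset.Icc (m + 1) (m + ⌊(j : ℝ) * b / a⌋₊)) ×ˢ {n - j}) with hFCdef
  have hsetI : {p : ℕ × ℕ | a * p.1 + b * p.2 < a * m + b * n} = ↑(FA ∪ FB ∪ FC) := by
    ext ⟨p1, p2⟩
    simp only [hFAdef, hFBdef, hFCdef, Finset.coe_union, Set.mem_union, Finset.mem_coe,
      Finset.mem_erase, Finset.mem_product, Finset.mem_range, Finset.mem_biUnion,
      Finset.mem_Icc, Finset.mem_singleton, Set.mem_setOf_eq, Prod.mk.injEq, ne_eq,
      Nat.lt_succ_iff]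
    constructor
    · intro h
      by_cases hp1 : p1 ≤ m
      · by_cases hp2 : p2 ≤ n
        · left; left
          refine ⟨?_, hp1, hp2⟩
          rintro ⟨rfl, rfl⟩
          exact lt_irrefl _ h
        · -- p2 ≥ n + 1
          push_neg at hp2
          have hp1m : p1 < m := by
            by_contra hc
            have : p1 = m := by omega
            subst this
            have : b * (p2 : ℝ) < b * n := by linarith
            have : (p2 : ℝ) < n := lt_of_mul_lt_mul_left this hb.le
            have : p2 < n := by exact_mod_cast this
            omega
          left; right
          set i := m - p1 with hi
          refine ⟨i, ⟨by omega, by omega⟩, ⟨by omega, by omega, ?_⟩⟩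
          have hcast : ((i : ℕ) : ℝ) = (m : ℝ) - p1 := by
            rw [hi]; push_cast [Nat.cast_sub hp1m.le]; ring
          have hlt : ((p2 - n : ℕ) : ℝ) < (i : ℝ) * a / b := by
            have hc2 : ((p2 - n : ℕ) : ℝ) = (p2 : ℝ) - n := by
              push_cast [Nat.cast_sub hp2.le]; ring
            rw [hc2, lt_div_iff₀ hb]
            nlinarith [hcast]
          have := (natlt_irr (by positivity) (irr_ab hirr (by omega)) (p2 - n)).mp hlt
          omega
      · -- p1 ≥ m + 1
        push_neg at hp1
        have hp2n : p2 < n := by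
          by_contra hc
          push_neg at hc
          have h1 : (m : ℝ) + 1 ≤ p1 := by exact_mod_cast hp1
          have h2 : (n : ℝ) ≤ p2 := by exact_mod_cast hc
          nlinarith
        right
        set j := n - p2 with hj
        refine ⟨j, ⟨by omega, by omega⟩, ⟨by omega, ?_⟩, by omega⟩
        have hcast : ((j : ℕ) : ℝ) = (n : ℝ) - p2 := by
          rw [hj]; push_cast [Nat.cast_sub hp2n.le]; ring
        have hlt : ((p1 - m : ℕ) : ℝ) < (j : ℝ) * b / a := by
          have hc2 : ((p1 - m : ℕ) : ℝ) = (p1 : ℝ) - m := by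
            push_cast [Nat.cast_sub hp1.le]; ring
          rw [hc2, lt_div_iff₀ ha]
          nlinarith [hcast]
        have := (natlt_irr (by positivity) (irr_ba hirr (by omega)) (p1 - m)).mp hlt
        omega
    · rintro ((⟨hne, hp1, hp2⟩ | ⟨i, ⟨hi1, hi2⟩, hp1, hp2a, hp2b⟩) | ⟨j, ⟨hj1, hj2⟩, ⟨hp1a, hp1b⟩, hp2⟩)
      · have h1 : (p1 : ℝ) ≤ m := by exact_mod_cast hp1
        have h2 : (p2 : ℝ) ≤ n := by exact_mod_cast hp2
        rcases Nat.lt_or_ge p1 m with h | h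
        · have : (p1 : ℝ) < m := by exact_mod_cast h
          nlinarith
        · have hp1m : p1 = m := by omega
          have hp2n : p2 < n := by
            rcases Nat.lt_or_ge p2 n with h' | h'
            · exact h'
            · exact absurd ⟨hp1m, by omega⟩ hne
          have : (p2 : ℝ) < n := by exact_mod_cast hp2n
          have : (p1 : ℝ) = m := by exact_mod_cast hp1m
          nlinarith
      · subst hp1
        have hlt : ((p2 - n : ℕ) : ℝ) < (i : ℝ) * a / b :=
          (natlt_irr (by positivity) (irr_ab hirr hi1) (p2 - n)).mpr (by omega)
        have hc2 : ((p2 - n : ℕ) : ℝ) = (p2 : ℝ) - n := by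
          push_cast [Nat.cast_sub (by omega : n ≤ p2)]; ring
        rw [hc2, lt_div_iff₀ hb] at hlt
        have hcast : ((m - i : ℕ) : ℝ) = (m : ℝ) - i := by
          push_cast [Nat.cast_sub hi2]; ring
        rw [hcast]
        nlinarith
      · subst hp2
        have hlt : ((p1 - m : ℕ) : ℝ) < (j : ℝ) * b / a :=
          (natlt_irr (by positivity) (irr_ba hirr hj1) (p1 - m)).mpr (by omega)
        have hc2 : ((p1 - m : ℕ) : ℝ) = (p1 : ℝ) - m := by
          push_cast [Nat.cast_sub (by omega : m ≤ p1)]; ring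
        rw [hc2, lt_div_iff₀ ha] at hlt
        have hcast : ((n - j : ℕ) : ℝ) = (n : ℝ) - j := by
          push_cast [Nat.cast_sub hj2]; ring
        rw [hcast]
        nlinarith
  rw [hsetI, Set.ncard_coe_finset]
  have hdAB : Disjoint FA FB := by
    rw [Finset.disjoint_left]
    rintro ⟨p1, p2⟩ hA hB
    simp only [hFAdef, hFBdef, Finset.mem_erase, Finset.mem_product, Finset.mem_range,
      Finset.mem_biUnion, Finset.mem_Icc, Finset.mem_singleton, Nat.lt_succ_iff,
      Prod.mk.injEq] at hA hB
    obtain ⟨i, _, _, h⟩ := hB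
    omega
  have hdABC : Disjoint (FA ∪ FB) FC := by
    rw [Finset.disjoint_left]
    rintro ⟨p1, p2⟩ hAB hC
    simp only [hFCdef, Finset.mem_biUnion, Finset.mem_Icc, Finset.mem_product,
      Finset.mem_singleton, Prod.mk.injEq] at hC
    obtain ⟨j, hj, ⟨hj1, hj2⟩, hj3⟩ := hC
    rcases Finset.mem_union.mp hAB with hA | hB
    · simp only [hFAdef, Finset.mem_erase, Finset.mem_product, Finset.mem_range,
        Nat.lt_succ_iff, Prod.mk.injEq] at hA
      omega
    · simp only [hFBdef, Finset.mem_biUnion, Finset.mem_Icc, Finset.mem_singleton,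
        Finset.mem_product, Prod.mk.injEq] at hB
      obtain ⟨i, hi, h1, _⟩ := hB
      omega
  rw [Finset.card_union_of_disjoint hdABC, Finset.card_union_of_disjoint hdAB]
  have cA : FA.card = (m + 1) * (n + 1) - 1 := by
    rw [hFAdef, Finset.card_erase_of_mem (by simp), Finset.card_product]
    simp
  have cB : FB.card = ∑ i ∈ Finset.Icc 1 m, ⌊(i : ℝ) * a / b⌋₊ := by
    rw [hFBdef, Finset.card_biUnion]
    · refine Finset.sum_congr rfl fun i hi => ?_
      rw [Finset.card_product, Finset.card_singleton, Nat.card_Icc]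
      omega
    · intro i hi j hj hij
      rw [Function.onFun, Finset.disjoint_left]
      rintro ⟨p1, p2⟩ h1 h2
      simp only [Finset.mem_product, Finset.mem_singleton, Finset.mem_Icc] at h1 h2
      simp only [Finset.mem_coe, Finset.mem_Icc] at hi hj
      exact hij (by omega)
  have cC : FC.card = ∑ j ∈ Finset.Icc 1 n, ⌊(j : ℝ) * b / a⌋₊ := by
    rw [hFCdef, Finset.card_biUnion]
    · refine Finset.sum_congr rfl fun j hj => ?_
      rw [Finset.card_product, Finset.card_singleton, Nat.card_Icc]
      omega
    · intro i hi j hj hij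
      rw [Function.onFun, Finset.disjoint_left]
      rintro ⟨p1, p2⟩ h1 h2
      simp only [Finset.mem_product, Finset.mem_singleton, Finset.mem_Icc] at h1 h2
      simp only [Finset.mem_coe, Finset.mem_Icc] at hi hj
      exact hij (by omega)
  rw [cA, cB, cC]

section
variable {a b : ℝ}

lemma finite_lt (ha : 0 < a) (hb : 0 < b) (c : ℝ) :
    {p : ℕ × ℕ | a * p.1 + b * p.2 < c}.Finite :=
  (finite_le ha hb c).subset fun p hp => le_of_lt (Set.mem_setOf_eq ▸ hp)

lemma count_mono (ha : 0 < a) (hb : 0 < b) {L L' : ℝ} (h : L ≤ L') :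
    {p : ℕ × ℕ | a * p.1 + b * p.2 ≤ L}.ncard ≤ {p : ℕ × ℕ | a * p.1 + b * p.2 ≤ L'}.ncard :=
  Set.ncard_le_ncard (fun p hp => le_trans hp h) (finite_le ha hb L')

lemma count_le_eq (ha : 0 < a) (hb : 0 < b) (hirr : Irrational (a / b)) (m n : ℕ) :
    {p : ℕ × ℕ | a * p.1 + b * p.2 ≤ a * m + b * n}.ncard
      = {p : ℕ × ℕ | a * p.1 + b * p.2 < a * m + b * n}.ncard + 1 := by
  have hset : {p : ℕ × ℕ | a * p.1 + b * p.2 ≤ a * m + b * n}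
      = insert (m, n) {p : ℕ × ℕ | a * p.1 + b * p.2 < a * m + b * n} := by
    ext p
    simp only [mem_setOf_eq, mem_insert_iff]
    constructor
    · intro h
      rcases eq_or_lt_of_le h with h | h
      · exact Or.inl (vinj hb hirr h)
      · exact Or.inr h
    · rintro (rfl | h)
      · exact le_refl _
      · exact h.le
  rw [hset, Set.ncard_insert_of_notMem (by simp) (finite_lt ha hb _)]

lemma T_nonempty (ha : 0 < a) (hb : 0 < b) (k : ℕ) :
    {L : ℝ | k + 1 ≤ {p : ℕ × ℕ | a * p.1 + b * p.2 ≤ L}.ncard}.Nonempty := by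
  refine ⟨b * k, ?_⟩
  simp only [mem_setOf_eq]
  have hsub : ↑(({0} : Finset ℕ) ×ˢ Finset.range (k + 1))
      ⊆ {p : ℕ × ℕ | a * p.1 + b * p.2 ≤ b * k} := by
    rintro ⟨p1, p2⟩ hp
    simp only [Finset.coe_product, Finset.coe_singleton, Finset.coe_range, mem_prod,
      mem_singleton_iff, mem_Iio] at hp
    obtain ⟨rfl, hp2⟩ := hp
    simp only [mem_setOf_eq, Nat.cast_zero, mul_zero, zero_add]
    have : (p2 : ℝ) ≤ k := by exact_mod_cast Nat.lt_succ_iff.mp hp2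
    nlinarith
  calc k + 1 = (({0} : Finset ℕ) ×ˢ Finset.range (k + 1)).card := by simp
    _ = (↑(({0} : Finset ℕ) ×ˢ Finset.range (k + 1)) : Set (ℕ × ℕ)).ncard := by
        rw [Set.ncard_coe_finset]
    _ ≤ _ := Set.ncard_le_ncard hsub (finite_le ha hb _)

lemma T_bdd (ha : 0 < a) (hb : 0 < b) (k : ℕ) :
    BddBelow {L : ℝ | k + 1 ≤ {p : ℕ × ℕ | a * p.1 + b * p.2 ≤ L}.ncard} := by
  refine ⟨0, fun L hL => ?_⟩
  by_contra hc
  push_neg at hc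
  have : {p : ℕ × ℕ | a * p.1 + b * p.2 ≤ L} = ∅ := by
    ext ⟨p1, p2⟩
    simp only [mem_setOf_eq, mem_empty_iff_false, iff_false, not_le]
    calc L < 0 := hc
      _ ≤ a * p1 + b * p2 := by positivity
  simp only [mem_setOf_eq, this, Set.ncard_empty] at hL
  omega
end

theorem Nk_eq_iff_index' (a b : ℝ) (ha : 0 < a) (hb : 0 < b)
    (hirr : Irrational (a / b)) (m n k : ℕ) :
    a * m + b * n = sInf {L : ℝ | k + 1 ≤ {p : ℕ × ℕ | a * p.1 + b * p.2 ≤ L}.ncard} ↔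
      ((m + 1) * (n + 1) - 1 + ∑ i ∈ Finset.Icc 1 m, ⌊(i : ℝ) * a / b⌋
        + ∑ j ∈ Finset.Icc 1 n, ⌊(j : ℝ) * b / a⌋ : ℤ) = k := by
  set c := a * m + b * n with hc
  set T := {L : ℝ | k + 1 ≤ {p : ℕ × ℕ | a * p.1 + b * p.2 ≤ L}.ncard} with hT
  set K := ((m + 1) * (n + 1) - 1) + (∑ i ∈ Finset.Icc 1 m, ⌊(i : ℝ) * a / b⌋₊)
        + ∑ j ∈ Finset.Icc 1 n, ⌊(j : ℝ) * b / a⌋₊ with hK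
  have hKlt : {p : ℕ × ℕ | a * p.1 + b * p.2 < c}.ncard = K := count_lt ha hb hirr m n
  have hKle : {p : ℕ × ℕ | a * p.1 + b * p.2 ≤ c}.ncard = K + 1 := by
    rw [count_le_eq ha hb hirr m n, hKlt]
  -- the ℤ equation is equivalent to K = k
  have hcast : (((m + 1) * (n + 1) - 1 + ∑ i ∈ Finset.Icc 1 m, ⌊(i : ℝ) * a / b⌋
        + ∑ j ∈ Finset.Icc 1 n, ⌊(j : ℝ) * b / a⌋ : ℤ) = k) ↔ K = k := by
    have e1 : ∀ i ∈ Finset.Icc 1 m, (⌊(i : ℝ) * a / b⌋₊ : ℤ) = ⌊(i : ℝ) * a / b⌋ :=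
      fun i _ => Int.natCast_floor_eq_floor (by positivity)
    have e2 : ∀ j ∈ Finset.Icc 1 n, (⌊(j : ℝ) * b / a⌋₊ : ℤ) = ⌊(j : ℝ) * b / a⌋ :=
      fun j _ => Int.natCast_floor_eq_floor (by positivity)
    have hKZ : (K : ℤ) = (m + 1) * (n + 1) - 1 + ∑ i ∈ Finset.Icc 1 m, ⌊(i : ℝ) * a / b⌋
        + ∑ j ∈ Finset.Icc 1 n, ⌊(j : ℝ) * b / a⌋ := by
      rw [hK]
      push_cast [← Finset.sum_congr rfl e1, ← Finset.sum_congr rfl e2,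
        Nat.cast_sub (by nlinarith : 1 ≤ (m + 1) * (n + 1))]
      push_cast
      ring
    rw [← hKZ]
    exact ⟨fun h => by exact_mod_cast h, fun h => by exact_mod_cast h⟩
  rw [hcast]
  constructor
  · -- from sInf to K = k
    intro h
    by_contra hne
    rcases Nat.lt_or_ge K k with hKk | hKk
    · -- K < k : gap argument, sInf T > c
      have hcount_c : {p : ℕ × ℕ | a * p.1 + b * p.2 ≤ c}.ncard < k + 1 := by omega
      -- every L ∈ T has a witness p with c < v p ≤ L
      have hwit : ∀ L ∈ T, ∃ p : ℕ × ℕ, a * p.1 + b * p.2 ≤ L ∧ c < a * p.1 + b * p.2 := by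
        intro L hL
        by_contra hcon
        push_neg at hcon
        have hsub : {p : ℕ × ℕ | a * p.1 + b * p.2 ≤ L}
            ⊆ {p : ℕ × ℕ | a * p.1 + b * p.2 ≤ c} := by
          intro p hp
          exact hcon p hp
        have := Set.ncard_le_ncard hsub (finite_le ha hb c)
        have hL' : k + 1 ≤ {p : ℕ × ℕ | a * p.1 + b * p.2 ≤ L}.ncard := hL
        omega
      -- finite set of combination values in (c, c+1]
      set G := {p : ℕ × ℕ | a * p.1 + b * p.2 ≤ c + 1 ∧ c < a * p.1 + b * p.2} with hG
      have hGfin : G.Finite := (finite_le ha hb (c + 1)).subset fun p hp => hp.1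
      set GF := hGfin.toFinset with hGF
      by_cases hGne : GF.Nonempty
      · set δ := GF.inf' hGne (fun p => a * p.1 + b * p.2) with hδ
        have hδc : c < δ := by
          rw [hδ]
          rcases Finset.exists_mem_eq_inf' hGne (fun p => a * p.1 + b * p.2) with ⟨p, hp, hpe⟩
          rw [hpe]
          exact ((hGfin.mem_toFinset.mp hp).2)
        have hδc1 : δ ≤ c + 1 := by
          rcases Finset.exists_mem_eq_inf' hGne (fun p => a * p.1 + b * p.2) with ⟨p, hp, hpe⟩
          rw [hδ, hpe]
          exact (hGfin.mem_toFinset.mp hp).1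
        have hlb : ∀ L ∈ T, δ ≤ L := by
          intro L hL
          obtain ⟨p, hp1, hp2⟩ := hwit L hL
          by_cases hple : a * p.1 + b * p.2 ≤ c + 1
          · have hmem : p ∈ GF := hGfin.mem_toFinset.mpr ⟨hple, hp2⟩
            calc δ ≤ a * p.1 + b * p.2 := Finset.inf'_le _ hmem
              _ ≤ L := hp1
          · push_neg at hple
            linarith
        have h2 : δ ≤ sInf T := le_csInf (T_nonempty ha hb k) hlb
        rw [← h] at h2
        linarith
      · -- no values in (c, c+1]: lower bound c + 1
        have hlb : ∀ L ∈ T, c + 1 ≤ L := by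
          intro L hL
          obtain ⟨p, hp1, hp2⟩ := hwit L hL
          by_cases hple : a * p.1 + b * p.2 ≤ c + 1
          · exact absurd ⟨p, hGfin.mem_toFinset.mpr ⟨hple, hp2⟩⟩ hGne
          · push_neg at hple; linarith
        have h2 : c + 1 ≤ sInf T := le_csInf (T_nonempty ha hb k) hlb
        rw [← h] at h2
        linarith
    · -- K > k : there is L < c with L ∈ T
      have hKk' : k + 1 ≤ K := by omega
      set Slt := {p : ℕ × ℕ | a * p.1 + b * p.2 < c} with hSlt
      have hSfin : Slt.Finite := finite_lt ha hb c
      have hSne : (hSfin.toFinset).Nonempty :=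
        hSfin.toFinset_nonempty.mpr (Set.nonempty_of_ncard_ne_zero (by omega))
      set L := (hSfin.toFinset).sup' hSne (fun p => a * p.1 + b * p.2) with hL
      have hLc : L < c := by
        rcases Finset.exists_mem_eq_sup' hSne (fun p => a * p.1 + b * p.2) with ⟨p, hp, hpe⟩
        rw [hL, hpe]
        exact hSfin.mem_toFinset.mp hp
      have hLT : L ∈ T := by
        have hsub : Slt ⊆ {p : ℕ × ℕ | a * p.1 + b * p.2 ≤ L} := by
          intro p hp
          exact Finset.le_sup' (fun p => a * p.1 + b * p.2) (hSfin.mem_toFinset.mpr hp)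
        have := Set.ncard_le_ncard hsub (finite_le ha hb L)
        simp only [hT, mem_setOf_eq]
        omega
      have h2 : sInf T ≤ L := csInf_le (T_bdd ha hb k) hLT
      rw [← h] at h2
      linarith
  · -- from K = k to sInf characterization
    intro hKk
    subst hKk
    refine (IsLeast.csInf_eq ⟨?_, ?_⟩).symm
    · simp only [hT, mem_setOf_eq]
      omega
    · intro L hL
      by_contra hc'
      push_neg at hc'
      have hsub : {p : ℕ × ℕ | a * p.1 + b * p.2 ≤ L}
          ⊆ {p : ℕ × ℕ | a * p.1 + b * p.2 < c} := fun p hp => lt_of_le_of_lt hp hc'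
      have := Set.ncard_le_ncard hsub (finite_lt ha hb c)
      have hL' : K + 1 ≤ {p : ℕ × ℕ | a * p.1 + b * p.2 ≤ L}.ncard := hL
      omega


theorem Nk_eq_iff_index (a b : ℝ) (ha : 0 < a) (hb : 0 < b)
    (hirr : Irrational (a / b)) (m n k : ℕ) :
    a * m + b * n = Nk a b k ↔
      ((m + 1) * (n + 1) - 1 + ∑ i ∈ Finset.Icc 1 m, ⌊(i : ℝ) * a / b⌋
        + ∑ j ∈ Finset.Icc 1 n, ⌊(j : ℝ) * b / a⌋ : ℤ) = k := by
  unfold Nk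
  exact Nk_eq_iff_index' a b ha hb hirr m n k
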